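/- Let G be a cubic graph on n ≥ 8 vertices admitting a self-identifying code. Then SIC(G) = n if and only if V(G) can be partitioned into vertex-disjoint triangles. -/

import Mathlib

def closedNbhd {V : Type*} (G : SimpleGraph V) (v : V) : Set V :=
  insert v (G.neighborSet v)

def IsSIC {V : Type*} (G : SimpleGraph V) (S : Set V) : Prop :=
  (∀ x : V, (closedNbhd G x ∩ S).Nonempty) ∧
    ∀ u v : V, u ≠ v →
      ((closedNbhd G u ∩ S) \ (closedNbhd G v ∩ S)).Nonempty ∧
      ((closedNbhd G v ∩ S) \ (closedNbhd G u ∩ S)).Nonempty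

def IsTriangle {V : Type*} [DecidableEq V] (G : SimpleGraph V) (t : Finset V) : Prop :=
  t.card = 3 ∧ ∀ u ∈ t, ∀ v ∈ t, u ≠ v → G.Adj u v

set_option linter.unusedSectionVars false
namespace SICaux

variable {V : Type*} [Fintype V] [DecidableEq V] {G : SimpleGraph V} [DecidableRel G.Adj]

lemma mem_cn {u x : V} : x ∈ closedNbhd G u ↔ x = u ∨ G.Adj u x := by
  simp [closedNbhd]

lemma nbr_card (hcubic : G.IsRegularOfDegree 3) (u : V) :
    (G.neighborFinset u).card = 3 := hcubic u

lemma nbr_eq (hcubic : G.IsRegularOfDegree 3) {u a b c : V}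
    (h1 : G.Adj u a) (h2 : G.Adj u b) (h3 : G.Adj u c)
    (hab : a ≠ b) (hac : a ≠ c) (hbc : b ≠ c) : G.neighborFinset u = {a, b, c} := by
  refine (Finset.eq_of_subset_of_card_le ?_ ?_).symm
  · intro x hx
    simp only [Finset.mem_insert, Finset.mem_singleton] at hx
    rcases hx with rfl | rfl | rfl <;> simp [SimpleGraph.mem_neighborFinset, h1, h2, h3]
  · have : ({a, b, c} : Finset V).card = 3 := by
      rw [Finset.card_insert_of_notMem (by simp [hab, hac]),
        Finset.card_insert_of_notMem (by simp [hbc]), Finset.card_singleton]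
    rw [nbr_card hcubic, this]

lemma third_nbr (hcubic : G.IsRegularOfDegree 3) {u a b : V}
    (h1 : G.Adj u a) (h2 : G.Adj u b) (hab : a ≠ b) :
    ∃ c, c ≠ a ∧ c ≠ b ∧ G.Adj u c ∧ G.neighborFinset u = {a, b, c} := by
  have hex : ∃ c ∈ G.neighborFinset u, c ∉ ({a, b} : Finset V) := by
    by_contra hc
    push_neg at hc
    have hsub : G.neighborFinset u ⊆ {a, b} := fun x hx => hc x hx
    have := Finset.card_le_card hsub
    rw [nbr_card hcubic] at this
    have h2' : ({a, b} : Finset V).card ≤ 2 := Finset.card_insert_le _ _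
    omega
  obtain ⟨c, hc1, hc2⟩ := hex
  simp only [Finset.mem_insert, Finset.mem_singleton, not_or] at hc2
  have hadjc : G.Adj u c := by simpa using hc1
  exact ⟨c, hc2.1, hc2.2, hadjc,
    nbr_eq hcubic h1 h2 hadjc hab (Ne.symm hc2.1) (Ne.symm hc2.2)⟩

lemma helper_ct (hcubic : G.IsRegularOfDegree 3)
    (hns : ∀ u w : V, u ≠ w → ∃ y, y ∈ closedNbhd G u ∧ y ∉ closedNbhd G w)
    {p q x y : V} (hpq : G.Adj p q) (hx : G.Adj p x) (hy : G.Adj p y)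
    (hqx : G.Adj q x) (hqy : G.Adj q y) (hxy : x ≠ y) : False := by
  have hNp := nbr_eq hcubic hpq hx hy hqx.ne hqy.ne hxy
  obtain ⟨z, hz1, hz2⟩ := hns p q hpq.ne
  rcases mem_cn.mp hz1 with rfl | hz
  · exact hz2 (mem_cn.mpr (Or.inr hpq.symm))
  · have : z ∈ G.neighborFinset p := by simpa using hz
    rw [hNp] at this
    simp only [Finset.mem_insert, Finset.mem_singleton] at this
    rcases this with rfl | rfl | rfl
    · exact hz2 (mem_cn.mpr (Or.inl rfl))
    · exact hz2 (mem_cn.mpr (Or.inr hqx))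
    · exact hz2 (mem_cn.mpr (Or.inr hqy))


def TwinA (G : SimpleGraph V) [DecidableRel G.Adj] (v : V) : Prop :=
  ∃ w, w ≠ v ∧ ¬ G.Adj v w ∧ G.neighborFinset v = G.neighborFinset w

def TriB (G : SimpleGraph V) [DecidableRel G.Adj] (v : V) : Prop :=
  ∃ u w x, G.Adj u v ∧ G.Adj w x ∧ v ≠ w ∧ v ≠ x ∧ w ≠ x ∧
    G.neighborFinset u = {v, w, x}

def InTri (G : SimpleGraph V) (v : V) : Prop :=
  ∃ a b, G.Adj v a ∧ G.Adj v b ∧ G.Adj a b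

def ForcedCfg (G : SimpleGraph V) (v : V) : Prop :=
  ∃ u w : V, v ∈ closedNbhd G u ∧ v ∉ closedNbhd G w ∧
    ∀ y ∈ closedNbhd G u, y ≠ v → y ∈ closedNbhd G w

lemma forced_imp (hcubic : G.IsRegularOfDegree 3) {v : V} (h : ForcedCfg G v) :
    TwinA G v ∨ TriB G v := by
  obtain ⟨u, w, hvu, hvw, hsub⟩ := h
  by_cases huv : v = u
  · subst huv
    left
    have hwv : w ≠ v := fun hw => hvw (hw ▸ mem_cn.mpr (Or.inl rfl))
    have hnadj : ¬ G.Adj v w := fun hadj => hvw (mem_cn.mpr (Or.inr hadj.symm))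
    refine ⟨w, hwv, hnadj, Finset.eq_of_subset_of_card_le ?_ ?_⟩
    · intro y hy
      have hadj : G.Adj v y := by simpa using hy
      have hy' : y ∈ closedNbhd G w := hsub y (mem_cn.mpr (Or.inr hadj)) hadj.ne'
      rcases mem_cn.mp hy' with rfl | h
      · exact absurd hadj hnadj
      · simpa using h
    · rw [nbr_card hcubic, nbr_card hcubic]
  · right
    have hadj_uv : G.Adj u v := by
      rcases mem_cn.mp hvu with h | h
      · exact absurd h huv
      · exact h
    have huvne : u ≠ v := hadj_uv.ne
    have huw : u ∈ closedNbhd G w := hsub u (mem_cn.mpr (Or.inl rfl)) huvne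
    rcases mem_cn.mp huw with rfl | hwu
    · exact absurd hvu hvw
    have hvwne : v ≠ w := fun h => hvw (h ▸ mem_cn.mpr (Or.inl rfl))
    obtain ⟨x, hxv, hxw, hux, hNu⟩ := third_nbr hcubic hadj_uv hwu.symm hvwne
    have hwx : G.Adj w x := by
      have hx' : x ∈ closedNbhd G w := hsub x (mem_cn.mpr (Or.inr hux)) hxv
      rcases mem_cn.mp hx' with rfl | h
      · exact absurd rfl hxw
      · exact h
    exact ⟨u, w, x, hadj_uv, hwx, hvwne, Ne.symm hxv, Ne.symm hxw, hNu⟩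

lemma adj_of_mem_nbr {u x : V} (h : x ∈ G.neighborFinset u) : G.Adj u x := by simpa using h

lemma bstep (hcubic : G.IsRegularOfDegree 3)
    (hns : ∀ u w : V, u ≠ w → ∃ y, y ∈ closedNbhd G u ∧ y ∉ closedNbhd G w)
    (hforced : ∀ z, TwinA G z ∨ TriB G z) {v : V} (hB : TriB G v) : InTri G v := by
  obtain ⟨u, w, x, huv, hwx, hvw, hvx, hwxne, hNu⟩ := hB
  have huw : G.Adj u w := adj_of_mem_nbr (by rw [hNu]; simp)
  have hux : G.Adj u x := adj_of_mem_nbr (by rw [hNu]; simp)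
  rcases hforced u with ⟨t, htu, htnadj, hNt⟩ | ⟨u₁, p, q, hu₁, hpq, hup, huq, hpqne, hNu₁⟩
  · -- open twin of u : contradiction
    have htw : G.Adj t w := adj_of_mem_nbr (by rw [← hNt, hNu]; simp)
    have htx : G.Adj t x := adj_of_mem_nbr (by rw [← hNt, hNu]; simp)
    exact absurd (helper_ct hcubic hns hwx huw.symm htw.symm hux.symm htx.symm (Ne.symm htu))
      not_false
  · -- u₁ ∈ {v, w, x}
    have hmem : u₁ ∈ G.neighborFinset u := by simpa using hu₁.symm
    rw [hNu] at hmem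
    simp only [Finset.mem_insert, Finset.mem_singleton] at hmem
    have hu₁p : G.Adj u₁ p := adj_of_mem_nbr (by rw [hNu₁]; simp)
    have hu₁q : G.Adj u₁ q := adj_of_mem_nbr (by rw [hNu₁]; simp)
    rcases hmem with rfl | rfl | rfl
    · exact ⟨p, q, hu₁p, hu₁q, hpq⟩
    · -- u₁ = w
      have hxmem : x ∈ G.neighborFinset u₁ := by simpa using hwx
      rw [hNu₁] at hxmem
      simp only [Finset.mem_insert, Finset.mem_singleton] at hxmem
      rcases hxmem with rfl | rfl | rfl
      · exact absurd rfl hux.ne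
      · exact absurd (helper_ct hcubic hns hwx huw.symm hu₁q hux.symm hpq huq)
          not_false
      · exact absurd (helper_ct hcubic hns hwx huw.symm hu₁p hux.symm hpq.symm hup)
          not_false
    · -- u₁ = x
      have hwmem : w ∈ G.neighborFinset u₁ := by simpa using hwx.symm
      rw [hNu₁] at hwmem
      simp only [Finset.mem_insert, Finset.mem_singleton] at hwmem
      rcases hwmem with rfl | rfl | rfl
      · exact absurd rfl huw.ne
      · exact absurd (helper_ct hcubic hns hwx.symm hux.symm hu₁q huw.symm hpq huq)
          not_false
      · exact absurd (helper_ct hcubic hns hwx.symm hux.symm hu₁p huw.symm hpq.symm hup)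
          not_false

lemma mem_tri {t : Finset V} (ht : IsTriangle G t) {v : V} (hv : v ∈ t) :
    ∃ a b, a ≠ b ∧ t = {v, a, b} ∧ G.Adj v a ∧ G.Adj v b ∧ G.Adj a b := by
  obtain ⟨x, y, z, hxy, hxz, hyz, rfl⟩ := Finset.card_eq_three.mp ht.1
  have hadj := ht.2
  have hx : x ∈ ({x, y, z} : Finset V) := by simp
  have hy : y ∈ ({x, y, z} : Finset V) := by simp
  have hz : z ∈ ({x, y, z} : Finset V) := by simp
  have haxy : G.Adj x y := hadj x hx y hy hxy
  have haxz : G.Adj x z := hadj x hx z hz hxz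
  have hayz : G.Adj y z := hadj y hy z hz hyz
  simp only [Finset.mem_insert, Finset.mem_singleton] at hv
  rcases hv with rfl | rfl | rfl
  · exact ⟨y, z, hyz, rfl, haxy, haxz, hayz⟩
  · exact ⟨x, z, hxz, by ext a; simp; tauto, haxy.symm, hayz, haxz⟩
  · exact ⟨x, y, hxy, by ext a; simp; tauto, haxz.symm, hayz.symm, haxy⟩

lemma tri_unique (hcubic : G.IsRegularOfDegree 3)
    (hns : ∀ u w : V, u ≠ w → ∃ y, y ∈ closedNbhd G u ∧ y ∉ closedNbhd G w)
    {t1 t2 : Finset V} (ht1 : IsTriangle G t1) (ht2 : IsTriangle G t2)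
    {v : V} (hv1 : v ∈ t1) (hv2 : v ∈ t2) : t1 = t2 := by
  obtain ⟨a, b, hab, rfl, hva, hvb, hab'⟩ := mem_tri ht1 hv1
  obtain ⟨c, d, hcd, rfl, hvc, hvd, hcd'⟩ := mem_tri ht2 hv2
  by_cases hca : c = a
  · subst hca
    by_cases hdb : d = b
    · subst hdb; rfl
    · exact absurd (helper_ct hcubic hns hva hvb hvd hab' hcd' (Ne.symm hdb)) not_false
  · by_cases hcb : c = b
    · subst hcb
      by_cases hda : d = a
      · subst hda; ext z; simp; tauto
      · exact absurd (helper_ct hcubic hns hvb hva hvd hab'.symm hcd' (Ne.symm hda)) not_false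
    · have hNv := nbr_eq hcubic hva hvb hvc hab (Ne.symm hca) (Ne.symm hcb)
      have hdm : d ∈ G.neighborFinset v := by simpa using hvd
      rw [hNv] at hdm
      simp only [Finset.mem_insert, Finset.mem_singleton] at hdm
      rcases hdm with rfl | rfl | rfl
      · exact absurd (helper_ct hcubic hns hva hvb hvc hab' hcd'.symm (Ne.symm hcb)) not_false
      · exact absurd (helper_ct hcubic hns hvb hva hvc hab'.symm hcd'.symm (Ne.symm hca)) not_false
      · exact absurd rfl (Ne.symm hcd)

set_option maxHeartbeats 1600000 in
lemma allTri (hcubic : G.IsRegularOfDegree 3)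
    (hns : ∀ u w : V, u ≠ w → ∃ y, y ∈ closedNbhd G u ∧ y ∉ closedNbhd G w)
    (hforced : ∀ z, TwinA G z ∨ TriB G z) (hconn : G.Connected)
    (hn : 8 ≤ Fintype.card V) : ∀ v, InTri G v := by
  intro v
  by_contra hni
  have hAv : TwinA G v := by
    rcases hforced v with h | h
    · exact h
    · exact absurd (bstep hcubic hns hforced h) hni
  obtain ⟨w, hwv, hnadj, hNvw⟩ := hAv
  obtain ⟨a, b, c, hab, hac, hbc, hNv⟩ := Finset.card_eq_three.mp (nbr_card hcubic v)
  have step : ∀ p q r : V, p ≠ q → p ≠ r → q ≠ r → G.neighborFinset v = {p, q, r} →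
      ∃ p', (p' ≠ v ∧ p' ≠ w ∧ G.neighborFinset p = {v, w, p'}) ∧
        ∃ t, (t = q ∨ t = r) ∧ G.neighborFinset p = G.neighborFinset t := by
    intro p q r hpq hpr hqr hN
    have hvp : G.Adj v p := adj_of_mem_nbr (by rw [hN]; simp)
    have hvq : G.Adj v q := adj_of_mem_nbr (by rw [hN]; simp)
    have hvr : G.Adj v r := adj_of_mem_nbr (by rw [hN]; simp)
    have hwp : G.Adj w p := adj_of_mem_nbr (by rw [← hNvw, hN]; simp)
    have hwq : G.Adj w q := adj_of_mem_nbr (by rw [← hNvw, hN]; simp)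
    have hwr : G.Adj w r := adj_of_mem_nbr (by rw [← hNvw, hN]; simp)
    have hnadj_pq : ¬ G.Adj p q := fun h =>
      helper_ct hcubic hns h hvp.symm hwp.symm hvq.symm hwq.symm (Ne.symm hwv)
    have hnadj_pr : ¬ G.Adj p r := fun h =>
      helper_ct hcubic hns h hvp.symm hwp.symm hvr.symm hwr.symm (Ne.symm hwv)
    obtain ⟨p', hp'v, hp'w, hpp', hNp⟩ := third_nbr hcubic hvp.symm hwp.symm (Ne.symm hwv)
    have hnvp' : ¬ G.Adj v p' := by
      intro h
      have hm : p' ∈ G.neighborFinset v := by simpa using h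
      rw [hN] at hm
      simp only [Finset.mem_insert, Finset.mem_singleton] at hm
      rcases hm with rfl | rfl | rfl
      · exact G.loopless.irrefl _ hpp'
      · exact hnadj_pq hpp'
      · exact hnadj_pr hpp'
    have hnwp' : ¬ G.Adj w p' := by
      intro h
      have hm : p' ∈ G.neighborFinset v := by rw [hNvw]; simpa using h
      rw [hN] at hm
      simp only [Finset.mem_insert, Finset.mem_singleton] at hm
      rcases hm with rfl | rfl | rfl
      · exact G.loopless.irrefl _ hpp'
      · exact hnadj_pq hpp'
      · exact hnadj_pr hpp'
    have hnInTri : ¬ InTri G p := by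
      rintro ⟨y, z, h1, h2, h3⟩
      have hy : y ∈ G.neighborFinset p := by simpa using h1
      have hz : z ∈ G.neighborFinset p := by simpa using h2
      rw [hNp] at hy hz
      simp only [Finset.mem_insert, Finset.mem_singleton] at hy hz
      rcases hy with rfl | rfl | rfl <;> rcases hz with rfl | rfl | rfl <;>
        first
          | exact G.loopless.irrefl _ h3
          | exact hnadj h3
          | exact hnadj h3.symm
          | exact hnvp' h3
          | exact hnvp' h3.symm
          | exact hnwp' h3
          | exact hnwp' h3.symm
    have hAp : TwinA G p := by
      rcases hforced p with h | h
      · exact h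
      · exact absurd (bstep hcubic hns hforced h) hnInTri
    obtain ⟨t, htp, htnadj, hNpt⟩ := hAp
    have htv : G.Adj t v := adj_of_mem_nbr (by rw [← hNpt, hNp]; simp)
    have htm : t ∈ G.neighborFinset v := by simpa using htv.symm
    rw [hN] at htm
    simp only [Finset.mem_insert, Finset.mem_singleton] at htm
    rcases htm with rfl | rfl | rfl
    · exact absurd rfl htp
    · exact ⟨p', ⟨hp'v, hp'w, hNp⟩, t, Or.inl rfl, hNpt⟩
    · exact ⟨p', ⟨hp'v, hp'w, hNp⟩, t, Or.inr rfl, hNpt⟩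
  have hperm1 : G.neighborFinset v = {b, a, c} := by rw [hNv]; ext s; simp; tauto
  have hperm2 : G.neighborFinset v = {c, a, b} := by rw [hNv]; ext s; simp; tauto
  obtain ⟨a', ⟨ha'v, ha'w, hNa⟩, ta, hta, hNta⟩ := step a b c hab hac hbc hNv
  obtain ⟨b', ⟨hb'1, hb'2, hNb⟩, tb, htb, hNtb⟩ := step b a c (Ne.symm hab) hbc hac hperm1
  obtain ⟨c', ⟨hc'1, hc'2, hNc⟩, tc, htc, hNtc⟩ :=
    step c a b (Ne.symm hac) (Ne.symm hbc) hab hperm2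
  have hNN : G.neighborFinset a = G.neighborFinset b ∧
      G.neighborFinset a = G.neighborFinset c := by
    rcases hta with rfl | rfl
    · refine ⟨hNta, ?_⟩
      rcases htc with rfl | rfl
      · exact hNtc.symm
      · exact hNta.trans hNtc.symm
    · refine ⟨?_, hNta⟩
      rcases htb with rfl | rfl
      · exact hNtb.symm
      · exact hNta.trans hNtb.symm
  obtain ⟨hNab, hNac⟩ := hNN
  have haa' : G.Adj a a' := adj_of_mem_nbr (by rw [hNa]; simp)
  have hba' : G.Adj b a' := adj_of_mem_nbr (by rw [← hNab, hNa]; simp)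
  have hca' : G.Adj c a' := adj_of_mem_nbr (by rw [← hNac, hNa]; simp)
  have hNa' : G.neighborFinset a' = {a, b, c} :=
    nbr_eq hcubic haa'.symm hba'.symm hca'.symm hab hac hbc
  set U : Finset V := {v, w, a', a, b, c} with hU
  have hstepU : ∀ z ∈ U, ∀ y, G.Adj z y → y ∈ U := by
    intro z hz y hy
    have hy' : y ∈ G.neighborFinset z := by simpa using hy
    simp only [hU, Finset.mem_insert, Finset.mem_singleton] at hz ⊢
    rcases hz with rfl | rfl | rfl | rfl | rfl | rfl
    · rw [hNv] at hy'; simp only [Finset.mem_insert, Finset.mem_singleton] at hy'; tauto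
    · rw [← hNvw, hNv] at hy'
      simp only [Finset.mem_insert, Finset.mem_singleton] at hy'; tauto
    · rw [hNa'] at hy'; simp only [Finset.mem_insert, Finset.mem_singleton] at hy'; tauto
    · rw [hNa] at hy'; simp only [Finset.mem_insert, Finset.mem_singleton] at hy'; tauto
    · rw [← hNab, hNa] at hy'
      simp only [Finset.mem_insert, Finset.mem_singleton] at hy'; tauto
    · rw [← hNac, hNa] at hy'
      simp only [Finset.mem_insert, Finset.mem_singleton] at hy'; tauto
  have hkey : ∀ x y : V, G.Walk x y → x ∈ U → y ∈ U := by
    intro x y p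
    induction p with
    | nil => exact id
    | cons h q ih => exact fun hx => ih (hstepU _ hx _ h)
  have hall : ∀ y, y ∈ U := fun y => by
    obtain ⟨p⟩ := hconn v y
    exact hkey v y p (by simp [hU])
  have hle : Fintype.card V ≤ U.card := by
    rw [← Finset.card_univ]
    exact Finset.card_le_card fun x _ => hall x
  have h1 := Finset.card_insert_le v ({w, a', a, b, c} : Finset V)
  have h2 := Finset.card_insert_le w ({a', a, b, c} : Finset V)
  have h3 := Finset.card_insert_le a' ({a, b, c} : Finset V)
  have h4 := Finset.card_insert_le a ({b, c} : Finset V)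
  have h5 := Finset.card_insert_le b ({c} : Finset V)
  have h6 : ({c} : Finset V).card = 1 := Finset.card_singleton c
  rw [hU] at hle
  omega

lemma no_semi (hadmits : ∃ S : Set V, IsSIC G S) :
    ∀ u w : V, u ≠ w → ∃ y, y ∈ closedNbhd G u ∧ y ∉ closedNbhd G w := by
  obtain ⟨S, hS⟩ := hadmits
  intro u w h
  obtain ⟨y, hy1, hy2⟩ := (hS.2 u w h).1
  exact ⟨y, hy1.1, fun hc => hy2 ⟨hc, hy1.2⟩⟩

lemma univ_sic (hadmits : ∃ S : Set V, IsSIC G S) : IsSIC G (Set.univ : Set V) := by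
  obtain ⟨S, hS⟩ := hadmits
  constructor
  · exact fun x => ⟨x, mem_cn.mpr (Or.inl rfl), trivial⟩
  · intro u v huv
    obtain ⟨⟨y, hy1, hy2⟩, ⟨z, hz1, hz2⟩⟩ := hS.2 u v huv
    exact ⟨⟨y, ⟨hy1.1, trivial⟩, fun hc => hy2 ⟨hc.1, hy1.2⟩⟩,
      ⟨z, ⟨hz1.1, trivial⟩, fun hc => hz2 ⟨hc.1, hz1.2⟩⟩⟩

lemma sic_compl (hcubic : G.IsRegularOfDegree 3)
    (hns : ∀ u w : V, u ≠ w → ∃ y, y ∈ closedNbhd G u ∧ y ∉ closedNbhd G w)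
    {v : V} (hnf : ¬ ForcedCfg G v) : IsSIC G (Set.univ \ {v}) := by
  have key : ∀ u w : V, u ≠ w →
      ((closedNbhd G u ∩ (Set.univ \ {v})) \ (closedNbhd G w ∩ (Set.univ \ {v}))).Nonempty := by
    intro u w huw
    by_contra hemp
    rw [Set.not_nonempty_iff_eq_empty] at hemp
    have hsub : ∀ y ∈ closedNbhd G u, y ≠ v → y ∈ closedNbhd G w := by
      intro y hy hyv
      by_contra hyw
      have : y ∈ (closedNbhd G u ∩ (Set.univ \ {v})) \
          (closedNbhd G w ∩ (Set.univ \ {v})) := ⟨⟨hy, trivial, hyv⟩, fun hc => hyw hc.1⟩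
      rw [hemp] at this
      exact this
    obtain ⟨y0, hy01, hy02⟩ := hns u w huw
    have hy0v : y0 = v := by
      by_contra hne
      exact hy02 (hsub y0 hy01 hne)
    subst hy0v
    exact hnf ⟨u, w, hy01, hy02, hsub⟩
  constructor
  · intro x
    by_cases hx : x = v
    · subst hx
      have hpos : 0 < (G.neighborFinset x).card := by rw [nbr_card hcubic]; omega
      obtain ⟨a, ha⟩ := Finset.card_pos.mp hpos
      have hadj : G.Adj x a := by simpa using ha
      exact ⟨a, mem_cn.mpr (Or.inr hadj), trivial, hadj.ne'⟩
    · exact ⟨x, mem_cn.mpr (Or.inl rfl), trivial, hx⟩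
  · exact fun u w huw => ⟨key u w huw, key w u (Ne.symm huw)⟩

lemma ncard_univ_diff (v : V) :
    (Set.univ \ {v} : Set V).ncard = Fintype.card V - 1 := by
  have h : (Set.univ \ {v} : Set V) = ↑(Finset.univ.erase v) := by
    ext x; simp [Ne, eq_comm]
  rw [h, Set.ncard_coe_finset, Finset.card_erase_of_mem (Finset.mem_univ v),
    Finset.card_univ]

lemma sic_eq_univ (hcubic : G.IsRegularOfDegree 3)
    {𝒯 : Finset (Finset V)} (h1 : ∀ t ∈ 𝒯, IsTriangle G t)
    (h2 : ∀ v : V, ∃! t, t ∈ 𝒯 ∧ v ∈ t)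
    {S : Set V} (hS : IsSIC G S) : S = Set.univ := by
  ext v
  simp only [Set.mem_univ, iff_true]
  by_contra hv
  obtain ⟨t, ⟨ht𝒯, hvt⟩, huniq⟩ := h2 v
  obtain ⟨a, b, hab, htab, hva, hvb, hab'⟩ := mem_tri (h1 t ht𝒯) hvt
  obtain ⟨c, hca, hcb, hvc, hNv⟩ := third_nbr hcubic hva hvb hab
  obtain ⟨t', ⟨ht'𝒯, hct'⟩, huniq'⟩ := h2 c
  have hsame : ∀ x, x ∈ t → x ∈ t' → False := by
    intro x hx hx'
    obtain ⟨tx, _, huniqx⟩ := h2 x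
    have e1 : t = tx := huniqx t ⟨ht𝒯, hx⟩
    have e2 : t' = tx := huniqx t' ⟨ht'𝒯, hx'⟩
    have : c ∈ t := by rw [e1, ← e2]; exact hct'
    rw [htab] at this
    simp only [Finset.mem_insert, Finset.mem_singleton] at this
    rcases this with rfl | rfl | rfl
    · exact G.loopless.irrefl _ hvc
    · exact hca rfl
    · exact hcb rfl
  obtain ⟨c1, c2, hc12, ht'c, hcc1, hcc2, hc12'⟩ := mem_tri (h1 t' ht'𝒯) hct'
  have hvt' : v ∉ t' := fun h => hsame v hvt h
  have hc1t' : c1 ∈ t' := by rw [ht'c]; simp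
  have hc2t' : c2 ∈ t' := by rw [ht'c]; simp
  have hvc1 : v ∉ closedNbhd G c1 := by
    intro h
    rcases mem_cn.mp h with rfl | hadj
    · exact hvt' hc1t'
    · have : c1 ∈ G.neighborFinset v := by simpa using hadj.symm
      rw [hNv] at this
      simp only [Finset.mem_insert, Finset.mem_singleton] at this
      rcases this with rfl | rfl | rfl
      · exact hsame c1 (by rw [htab]; simp) hc1t'
      · exact hsame c1 (by rw [htab]; simp) hc1t'
      · exact G.loopless.irrefl _ hcc1
  have hcne : c ≠ c1 := hcc1.ne
  obtain ⟨y, hy1, hy2⟩ := (hS.2 c c1 hcne).1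
  have hyS : y ∈ S := hy1.2
  have hync1 : y ∉ closedNbhd G c1 := fun hc => hy2 ⟨hc, hyS⟩
  have hNc : G.neighborFinset c = {c1, c2, v} := by
    refine nbr_eq hcubic hcc1 hcc2 hvc.symm hc12 ?_ ?_
    · exact fun h => hvt' (h ▸ hc1t')
    · exact fun h => hvt' (h ▸ hc2t')
  rcases mem_cn.mp hy1.1 with rfl | hadj
  · exact hync1 (mem_cn.mpr (Or.inr hcc1.symm))
  · have : y ∈ G.neighborFinset c := by simpa using hadj
    rw [hNc] at this
    simp only [Finset.mem_insert, Finset.mem_singleton] at this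
    rcases this with rfl | rfl | rfl
    · exact hync1 (mem_cn.mpr (Or.inl rfl))
    · exact hync1 (mem_cn.mpr (Or.inr hc12'))
    · exact hv hyS
end SICaux
theorem stmt_14 {V : Type*} [Fintype V] [DecidableEq V]
    (G : SimpleGraph V) [DecidableRel G.Adj]
    (hconn : G.Connected) (hcubic : G.IsRegularOfDegree 3)
    (hn : 8 ≤ Fintype.card V)
    (hadmits : ∃ S : Set V, IsSIC G S) :
    sInf {m : ℕ | ∃ S : Set V, IsSIC G S ∧ S.ncard = m} = Fintype.card V ↔
      ∃ 𝒯 : Finset (Finset V), (∀ t ∈ 𝒯, IsTriangle G t) ∧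
        ∀ v : V, ∃! t, t ∈ 𝒯 ∧ v ∈ t := by
  classical
  have hns := SICaux.no_semi hadmits
  have hVsic := SICaux.univ_sic hadmits
  have hnu : (Set.univ : Set V).ncard = Fintype.card V :=
    (Set.ncard_univ V).trans Nat.card_eq_fintype_card
  have hnmem : Fintype.card V ∈ {m : ℕ | ∃ S : Set V, IsSIC G S ∧ S.ncard = m} :=
    ⟨Set.univ, hVsic, hnu⟩
  constructor
  · intro hinf
    have hforced : ∀ v, SICaux.ForcedCfg G v := by
      intro v
      by_contra hnf
      have hmem : Fintype.card V - 1 ∈ {m : ℕ | ∃ S : Set V, IsSIC G S ∧ S.ncard = m} :=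
        ⟨Set.univ \ {v}, SICaux.sic_compl hcubic hns hnf, SICaux.ncard_univ_diff v⟩
      have hle := Nat.sInf_le hmem
      rw [hinf] at hle
      omega
    have hforced' : ∀ z, SICaux.TwinA G z ∨ SICaux.TriB G z :=
      fun z => SICaux.forced_imp hcubic (hforced z)
    have hAll := SICaux.allTri hcubic hns hforced' hconn hn
    have hT : ∀ v : V, ∃ t : Finset V, IsTriangle G t ∧ v ∈ t := by
      intro v
      obtain ⟨a, b, h1, h2, h3⟩ := hAll v
      refine ⟨{v, a, b}, ⟨?_, ?_⟩, by simp⟩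
      · rw [Finset.card_insert_of_notMem (by simp [h1.ne, h2.ne]),
          Finset.card_insert_of_notMem (by simp [h3.ne]), Finset.card_singleton]
      · intro x hx y hy hxy
        simp only [Finset.mem_insert, Finset.mem_singleton] at hx hy
        rcases hx with rfl | rfl | rfl <;> rcases hy with rfl | rfl | rfl <;>
          first
            | exact absurd rfl hxy
            | exact h1
            | exact h2
            | exact h3
            | exact h1.symm
            | exact h2.symm
            | exact h3.symm
    refine ⟨Finset.univ.image (fun v => (hT v).choose), ?_, ?_⟩
    · intro t ht
      obtain ⟨u, -, rfl⟩ := Finset.mem_image.mp ht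
      exact (hT u).choose_spec.1
    · intro v
      refine ⟨(hT v).choose, ⟨Finset.mem_image_of_mem _ (Finset.mem_univ v),
        (hT v).choose_spec.2⟩, ?_⟩
      rintro t' ⟨ht', hvt'⟩
      obtain ⟨u, -, rfl⟩ := Finset.mem_image.mp ht'
      exact SICaux.tri_unique hcubic hns (hT u).choose_spec.1 (hT v).choose_spec.1 hvt'
        (hT v).choose_spec.2
  · rintro ⟨𝒯, h1, h2⟩
    have hall : ∀ m ∈ {m : ℕ | ∃ S : Set V, IsSIC G S ∧ S.ncard = m},
        Fintype.card V ≤ m := by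
      rintro m ⟨S, hS, rfl⟩
      rw [SICaux.sic_eq_univ hcubic h1 h2 hS, hnu]
    exact le_antisymm (Nat.sInf_le hnmem) (le_csInf ⟨_, hnmem⟩ hall)
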